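/- Let n ≥ 4, let G be a group with a central element z of order 2, and let π : G → S_n be a surjective group homomorphism with kernel {1, z}. Assume that for every pair of disjoint transpositions τ₁, τ₂ ∈ S_n and any lifts x, y ∈ G with π(x) = τ₁, π(y) = τ₂, the commutator satisfies [x,y] = z. Then: (1) for distinct a, b ∈ {1,…,n}, any lift x of the transposition (a,b), and any lift y of a permutation σ fixing both a and b, one has [x,y] = 1 if σ is even and [x,y] = z if σ is odd; (2) consequently, for any cyclic subgroup U of the alternating group on {1,…,n}∖{a,b}, the preimage π^{-1}(⟨(a,b)⟩ × U) is an abelian subgroup of G. -/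

import Mathlib

open Equiv Equiv.Perm

section Aux

variable {G : Type*} [Group G] {n : ℕ}

private lemma comm_central (x c : G) (hc : c ∈ Subgroup.center G) :
    x⁻¹ * c⁻¹ * x * c = 1 := by
  have h : x * c = c * x := Subgroup.mem_center_iff.mp hc x
  calc x⁻¹ * c⁻¹ * x * c = x⁻¹ * c⁻¹ * (x * c) := by group
    _ = x⁻¹ * c⁻¹ * (c * x) := by rw [h]
    _ = 1 := by group

private lemma commute_of_comm_eq_one {x y : G} (h : x⁻¹ * y⁻¹ * x * y = 1) :
    Commute x y := by
  have h2 := congrArg (fun t => y * x * t) h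
  exact (by simpa [mul_assoc] using h2 : x * y = y * x)

private lemma comm_split (z : G) (hzc : z ∈ Subgroup.center G)
    (x w y' : G) (hw : x⁻¹ * w⁻¹ * x * w = z) :
    x⁻¹ * (w * y')⁻¹ * x * (w * y') = z * (x⁻¹ * y'⁻¹ * x * y') := by
  have hz : ∀ g : G, g * z = z * g := Subgroup.mem_center_iff.mp hzc
  calc x⁻¹ * (w * y')⁻¹ * x * (w * y')
      = x⁻¹ * y'⁻¹ * x * ((x⁻¹ * w⁻¹ * x * w) * y') := by group
    _ = x⁻¹ * y'⁻¹ * x * (z * y') := by rw [hw]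
    _ = x⁻¹ * y'⁻¹ * x * (y' * z) := by rw [hz]
    _ = (x⁻¹ * y'⁻¹ * x * y') * z := by group
    _ = z * (x⁻¹ * y'⁻¹ * x * y') := hz _

private lemma part1_aux (z : G) (hz2 : z ^ 2 = 1) (hzc : z ∈ Subgroup.center G)
    (π : G →* Equiv.Perm (Fin n))
    (hπsurj : Function.Surjective π)
    (hker : ∀ g : G, π g = 1 ↔ g = 1 ∨ g = z)
    (hcomm : ∀ a b c d : Fin n, a ≠ b → c ≠ d → a ≠ c → a ≠ d → b ≠ c → b ≠ d →
      ∀ x y : G, π x = Equiv.swap a b → π y = Equiv.swap c d →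
        x⁻¹ * y⁻¹ * x * y = z)
    (a b : Fin n) (hab : a ≠ b) (σ : Equiv.Perm (Fin n)) (ha : σ a = a) (hb : σ b = b)
    (x y : G) (hx : π x = Equiv.swap a b) (hy : π y = σ) :
    x⁻¹ * y⁻¹ * x * y = if Equiv.Perm.sign σ = 1 then 1 else z := by
  classical
  have hfa : ∀ i, σ i = a ↔ i = a :=
    fun i => ⟨fun h => σ.injective (h.trans ha.symm), fun h => h ▸ ha⟩
  have hfb : ∀ i, σ i = b ↔ i = b :=
    fun i => ⟨fun h => σ.injective (h.trans hb.symm), fun h => h ▸ hb⟩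
  have hσp : ∀ i : Fin n, (i ≠ a ∧ i ≠ b) ↔ (σ i ≠ a ∧ σ i ≠ b) := by
    intro i
    constructor
    · rintro ⟨h1, h2⟩
      exact ⟨fun h => h1 ((hfa i).mp h), fun h => h2 ((hfb i).mp h)⟩
    · rintro ⟨h1, h2⟩
      exact ⟨fun h => h1 ((hfa i).mpr h), fun h => h2 ((hfb i).mpr h)⟩
  have key : ∀ τ : Equiv.Perm {i : Fin n // i ≠ a ∧ i ≠ b}, ∀ y : G,
      π y = Equiv.Perm.ofSubtype τ →
      x⁻¹ * y⁻¹ * x * y = if Equiv.Perm.sign τ = 1 then 1 else z := by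
    intro τ
    refine Equiv.Perm.swap_induction_on τ ?_ ?_
    · intro y hy
      rw [map_one] at hy
      rw [if_pos (by simp)]
      rcases (hker y).mp hy with rfl | hyz
      · simp
      · rw [hyz]; exact comm_central x z hzc
    · intro f u v huv IH y hy
      obtain ⟨w, hw⟩ := hπsurj (Equiv.swap (u : Fin n) (v : Fin n))
      have huv' : (u : Fin n) ≠ (v : Fin n) := fun h => huv (Subtype.ext h)
      have hzw : x⁻¹ * w⁻¹ * x * w = z :=
        hcomm a b u v hab huv' (Ne.symm u.2.1) (Ne.symm v.2.1) (Ne.symm u.2.2)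
          (Ne.symm v.2.2) x w hx hw
      have hy' : π (w⁻¹ * y) = Equiv.Perm.ofSubtype f := by
        rw [map_mul, map_inv, hw, hy, map_mul, Equiv.Perm.ofSubtype_swap_eq,
          inv_mul_cancel_left]
      have hsplit : x⁻¹ * y⁻¹ * x * y =
          z * (x⁻¹ * (w⁻¹ * y)⁻¹ * x * (w⁻¹ * y)) := by
        have h := comm_split z hzc x w (w⁻¹ * y) hzw
        rwa [mul_inv_cancel_left] at h
      rw [hsplit, IH _ hy']
      have hsign : Equiv.Perm.sign (Equiv.swap u v * f) = -Equiv.Perm.sign f := by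
        rw [map_mul, Equiv.Perm.sign_swap huv, neg_mul, one_mul]
      rcases Int.units_eq_one_or (Equiv.Perm.sign f) with h | h
      · rw [if_pos h, hsign, h, mul_one, if_neg (by decide)]
      · rw [if_neg (by rw [h]; decide), hsign, h, neg_neg, if_pos rfl]
        calc z * z = z ^ 2 := (pow_two z).symm
          _ = 1 := hz2
  have h2 : ∀ i : Fin n, σ i ≠ i → (i ≠ a ∧ i ≠ b) := by
    intro i hi
    constructor
    · rintro rfl; exact hi ha
    · rintro rfl; exact hi hb
  have hof : Equiv.Perm.ofSubtype (σ.subtypePerm (fun i => (hσp i).symm)) = σ :=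
    Equiv.Perm.ofSubtype_subtypePerm (fun i => (hσp i).symm) h2
  have hres := key (σ.subtypePerm (fun i => (hσp i).symm)) y (by rw [hof, hy])
  rwa [← Equiv.Perm.sign_ofSubtype, hof] at hres

end Aux

/-- Let `n ≥ 4`, `G` a group with a central element `z` of order 2, and
`π : G → S_n` a surjective homomorphism with kernel `{1, z}`. Assume that for every pair of
disjoint transpositions `τ₁, τ₂ ∈ S_n` and any lifts `x, y`, one has `[x, y] = z`. Then:
(1) for distinct `a, b`, any lift `x` of the transposition `(a b)` and any lift `y` of a
permutation `σ` fixing `a` and `b`, one has `[x, y] = 1` if `σ` is even and `[x, y] = z` if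
`σ` is odd; (2) for any cyclic subgroup `U` of the alternating group on `{1,…,n} ∖ {a, b}`,
the preimage `π⁻¹(⟨(a b)⟩ × U)` is an abelian subgroup of `G`. -/
theorem stmt9 (n : ℕ) (hn : 4 ≤ n) (G : Type*) [Group G]
    (z : G) (hz1 : z ≠ 1) (hz2 : z ^ 2 = 1) (hzc : z ∈ Subgroup.center G)
    (π : G →* Equiv.Perm (Fin n)) (hπsurj : Function.Surjective π)
    (hker : ∀ g : G, π g = 1 ↔ g = 1 ∨ g = z)
    (hcomm : ∀ a b c d : Fin n, a ≠ b → c ≠ d → a ≠ c → a ≠ d → b ≠ c → b ≠ d →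
      ∀ x y : G, π x = Equiv.swap a b → π y = Equiv.swap c d →
        x⁻¹ * y⁻¹ * x * y = z) :
    (∀ a b : Fin n, a ≠ b → ∀ σ : Equiv.Perm (Fin n), σ a = a → σ b = b →
      ∀ x y : G, π x = Equiv.swap a b → π y = σ →
        (Equiv.Perm.sign σ = 1 → x⁻¹ * y⁻¹ * x * y = 1) ∧
        (Equiv.Perm.sign σ = -1 → x⁻¹ * y⁻¹ * x * y = z)) ∧
    (∀ a b : Fin n, a ≠ b → ∀ U : Subgroup (Equiv.Perm (Fin n)), IsCyclic U →
      (∀ σ ∈ U, σ a = a ∧ σ b = b ∧ Equiv.Perm.sign σ = 1) →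
      ∀ x y : G,
        x ∈ Subgroup.comap π (Subgroup.closure {Equiv.swap a b} ⊔ U) →
        y ∈ Subgroup.comap π (Subgroup.closure {Equiv.swap a b} ⊔ U) →
        Commute x y) := by
  constructor
  · intro a b hab σ ha hb x y hx hy
    have h := part1_aux z hz2 hzc π hπsurj hker hcomm a b hab σ ha hb x y hx hy
    constructor
    · intro hs; rwa [if_pos hs] at h
    · intro hs; rwa [if_neg (by rw [hs]; decide)] at h
  · intro a b hab U hUcyc hU x y hx hy
    classical
    set s : Equiv.Perm (Fin n) := Equiv.swap a b with hs
    set K : Set (Equiv.Perm (Fin n)) := {s} ∪ ↑U with hK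
    -- the commuting-lifts relation
    set Q : Equiv.Perm (Fin n) → Equiv.Perm (Fin n) → Prop :=
      fun g h => ∀ u v : G, π u = g → π v = h → Commute u v with hQ
    have hcz : ∀ u : G, Commute u z := fun u => Subgroup.mem_center_iff.mp hzc u
    have hQone : ∀ h, Q 1 h := by
      intro h u v hu _
      rcases (hker u).mp hu with rfl | rfl
      · exact Commute.one_left v
      · exact (hcz v).symm
    have hQsymm : ∀ g h, Q g h → Q h g := by
      intro g h hq u v hu hv
      exact (hq v u hv hu).symm
    have hQmul : ∀ g₁ g₂ h, Q g₁ h → Q g₂ h → Q (g₁ * g₂) h := by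
      intro g₁ g₂ h h1 h2 u v hu hv
      obtain ⟨u₁, hu₁⟩ := hπsurj g₁
      have hu₂ : π (u₁⁻¹ * u) = g₂ := by
        rw [map_mul, map_inv, hu₁, hu, ← mul_assoc, inv_mul_cancel, one_mul]
      have : u = u₁ * (u₁⁻¹ * u) := by group
      rw [this]
      exact (h1 u₁ v hu₁ hv).mul_left (h2 (u₁⁻¹ * u) v hu₂ hv)
    have hQinv : ∀ g h, Q g h → Q g⁻¹ h := by
      intro g h hq u v hu hv
      have hu' : π u⁻¹ = g := by rw [map_inv, hu, inv_inv]
      simpa using (hq u⁻¹ v hu' hv).inv_left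
    have hQsame : ∀ g, Q g g := by
      intro g u v hu hv
      have h1 : π (u⁻¹ * v) = 1 := by
        rw [map_mul, map_inv, hu, hv, inv_mul_cancel]
      rcases (hker _).mp h1 with h | h
      · have : v = u := by
          have := congrArg (fun t => u * t) h
          simpa [mul_assoc] using this
        rw [this]
      · have : v = u * z := by
          have := congrArg (fun t => u * t) h
          simpa [mul_assoc] using this
        rw [this]
        exact (Commute.refl u).mul_right (hcz u)
    have hQpow : ∀ (k : ℕ) (g h), Q g h → Q (g ^ k) h := by
      intro k g h hq
      induction k with
      | zero => simpa using hQone h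
      | succ m ih =>
        have := hQmul (g ^ m) g h ih hq
        simpa [pow_succ] using this
    have hQzpow : ∀ (k : ℤ) (g h), Q g h → Q (g ^ k) h := by
      intro k g h hq
      rcases k with k | k
      · simpa using hQpow k g h hq
      · rw [zpow_negSucc]
        exact hQinv _ _ (hQpow (k + 1) g h hq)
    -- Q holds on generators
    have hQsu : ∀ w ∈ U, Q s w := by
      intro w hw u v hu hv
      obtain ⟨hwa, hwb, hwsign⟩ := hU w hw
      have h := part1_aux z hz2 hzc π hπsurj hker hcomm a b hab w hwa hwb u v hu hv
      rw [if_pos hwsign] at h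
      exact commute_of_comm_eq_one h
    have base : ∀ g ∈ K, ∀ h ∈ K, Q g h := by
      rintro g (rfl | hgU) h (rfl | hhU)
      · exact hQsame _
      · exact hQsu h hhU
      · exact hQsymm _ _ (hQsu g hgU)
      · -- both in U: use cyclicity
        obtain ⟨w, hwgen⟩ := hUcyc.exists_generator
        obtain ⟨i, hi⟩ := Subgroup.mem_zpowers_iff.mp (hwgen ⟨g, hgU⟩)
        obtain ⟨j, hj⟩ := Subgroup.mem_zpowers_iff.mp (hwgen ⟨h, hhU⟩)
        have hg' : ((w : Equiv.Perm (Fin n))) ^ i = g := by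
          have := congrArg (Subtype.val) hi
          simpa using this
        have hh' : ((w : Equiv.Perm (Fin n))) ^ j = h := by
          have := congrArg (Subtype.val) hj
          simpa using this
        rw [← hg', ← hh']
        exact hQzpow i _ _ (hQsymm _ _ (hQzpow j _ _ (hQsame _)))
    have hsup : Subgroup.closure {s} ⊔ U = Subgroup.closure K := by
      rw [hK, Subgroup.closure_union, Subgroup.closure_eq]
    have step1 : ∀ g ∈ Subgroup.closure K, ∀ h ∈ K, Q g h := by
      intro g hg
      induction hg using Subgroup.closure_induction with
      | mem w hw => exact base w hw
      | one => exact fun h _ => hQone h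
      | mul w₁ w₂ _ _ ih1 ih2 => exact fun h hh => hQmul w₁ w₂ h (ih1 h hh) (ih2 h hh)
      | inv w _ ih => exact fun h hh => hQinv w h (ih h hh)
    have step2 : ∀ g ∈ Subgroup.closure K, ∀ h ∈ Subgroup.closure K, Q g h := by
      intro g hg h hh
      induction hh using Subgroup.closure_induction with
      | mem w hw => exact step1 g hg w hw
      | one => exact hQsymm _ _ (hQone g)
      | mul w₁ w₂ _ _ ih1 ih2 =>
        exact hQsymm _ _ (hQmul w₁ w₂ g (hQsymm _ _ ih1) (hQsymm _ _ ih2))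
      | inv w _ ih => exact hQsymm _ _ (hQinv w g (hQsymm _ _ ih))
    have hxK : π x ∈ Subgroup.closure K := by
      rw [← hsup]; exact hx
    have hyK : π y ∈ Subgroup.closure K := by
      rw [← hsup]; exact hy
    exact step2 (π x) hxK (π y) hyK x y rfl rfl
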